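/- Let F = GF(q) be a finite field, let L be a positive integer, let C be a linear [n,k] MDS code over F with k/n ≥ 1 - 1/L, and let H be an (n-k) × n parity-check matrix of C. Then C is lightly-L-MDS if and only if for every choice of L+1 pairwise disjoint subsets J_0, J_1, ..., J_L ⊆ {1,...,n} satisfying (S1) |J_m| ≤ n-k for every m ∈ {0,...,L} and (S2) Σ_{m=0}^{L} |J_m| = L(n-k), the square L(n-k) × L(n-k) matrix M_{J_0,...,J_L}(H)—whose rows are partitioned into L blocks of n-k rows, where for m ∈ {1,...,L} the m-th block row equals (−H_{J_0} | 0 | ... | 0 | H_{J_m} | 0 | ... | 0), with −H_{J_0} occupying the first |J_0| columns and H_{J_m} occupying the block of |J_m| columns corresponding to J_m, and H_{J} denoting the submatrix of H formed by the columns indexed by J—has nonzero determinant. -/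

import Mathlib

lemma pad_aux {α : Type*} [Fintype α] [DecidableEq α] {ι : Type*} [Fintype ι] [DecidableEq ι]
    (c : ℕ) (D : ℕ) (S : ι → Finset α)
    (hdisj : Pairwise fun i j => Disjoint (S i) (S j))
    (hle : ∀ i, (S i).card ≤ c)
    (h1 : (∑ i, (S i).card) + D ≤ Fintype.card ι * c)
    (h2 : (∑ i, (S i).card) + D ≤ Fintype.card α) :
    ∃ J : ι → Finset α, (∀ i, S i ⊆ J i) ∧
      (Pairwise fun i j => Disjoint (J i) (J j)) ∧
      (∀ i, (J i).card ≤ c) ∧ (∑ i, (J i).card) = (∑ i, (S i).card) + D := by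
  induction D with
  | zero => exact ⟨S, fun i => subset_rfl, hdisj, hle, by simp⟩
  | succ D ih =>
    obtain ⟨J, hJS, hJd, hJc, hJsum⟩ := ih (by omega) (by omega)
    have hex : ∃ i, (J i).card < c := by
      by_contra h
      push_neg at h
      have : ∀ i, (J i).card = c := fun i => le_antisymm (hJc i) (h i)
      have : (∑ i, (J i).card) = Fintype.card ι * c := by
        simp [this, Finset.sum_const, Finset.card_univ]
      omega
    obtain ⟨i, hi⟩ := hex
    have hcard : (Finset.univ.biUnion J).card = ∑ j, (J j).card :=
      Finset.card_biUnion (fun a _ b _ hab => hJd hab)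
    have hex2 : ∃ x, x ∉ Finset.univ.biUnion J := by
      by_contra h
      push_neg at h
      have : Finset.univ ⊆ Finset.univ.biUnion J := fun x _ => h x
      have := Finset.card_le_card this
      rw [Finset.card_univ] at this
      omega
    obtain ⟨x, hx⟩ := hex2
    have hxJ : ∀ j, x ∉ J j := by
      intro j hj
      exact hx (Finset.mem_biUnion.2 ⟨j, Finset.mem_univ j, hj⟩)
    refine ⟨Function.update J i (insert x (J i)), ?_, ?_, ?_, ?_⟩
    · intro j
      rcases eq_or_ne j i with rfl | h
      · simp only [Function.update_self]
        exact (hJS j).trans (Finset.subset_insert _ _)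
      · rw [Function.update_of_ne h]; exact hJS j
    · intro a b hab
      by_cases ha : a = i <;> by_cases hb : b = i
      · exact absurd (ha.trans hb.symm) hab
      · subst ha
        rw [Function.update_self, Function.update_of_ne hb]
        exact Finset.disjoint_insert_left.2 ⟨hxJ b, hJd hab⟩
      · subst hb
        rw [Function.update_self, Function.update_of_ne ha]
        exact Finset.disjoint_insert_right.2 ⟨hxJ a, hJd hab⟩
      · rw [Function.update_of_ne ha, Function.update_of_ne hb]; exact hJd hab
    · intro j
      rcases eq_or_ne j i with rfl | h
      · rw [Function.update_self, Finset.card_insert_of_notMem (hxJ j)]; omega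
      · rw [Function.update_of_ne h]; exact hJc j
    · have step : ∀ j, (Function.update J i (insert x (J i)) j).card
          = Function.update (fun j => (J j).card) i ((J i).card + 1) j := by
        intro j
        by_cases h : j = i
        · subst h
          simp [Finset.card_insert_of_notMem (hxJ j)]
        · simp [Function.update_of_ne h]
      rw [Finset.sum_congr rfl (fun j _ => step j),
        Finset.sum_update_of_mem (Finset.mem_univ i)]
      have h3 : (J i).card + ∑ j ∈ Finset.univ.erase i, (J j).card
          = ∑ j, (J j).card :=
        Finset.add_sum_erase Finset.univ (fun j => (J j).card) (Finset.mem_univ i)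
      rw [Finset.sdiff_singleton_eq_erase]
      omega




/-- The minimum Hamming distance of a linear code `C`, i.e. the minimum
Hamming weight of a nonzero codeword of `C`. -/
noncomputable def minHammingDist {F : Type*} [Field F] [DecidableEq F]
    {ι : Type*} [Fintype ι] (C : Submodule F (ι → F)) : ℕ :=
  sInf {w : ℕ | ∃ c ∈ C, c ≠ 0 ∧ hammingNorm c = w}

/-- A linear code of dimension `k` in `F^ι` is MDS if its minimum Hamming
distance equals `n - k + 1`, where `n = |ι|`. -/
noncomputable def IsMDSCode {F : Type*} [Field F] [DecidableEq F]
    {ι : Type*} [Fintype ι] (k : ℕ) (C : Submodule F (ι → F)) : Prop :=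
  minHammingDist C = Fintype.card ι - k + 1

/-- A linear code `C ⊆ F^ι` of dimension `k` and minimum distance `d` is
lightly `L`-MDS if there are no `L+1` nonzero vectors, each of Hamming weight
at most `d - 1`, lying in the same coset of `C`, having pairwise disjoint
supports, and whose Hamming weights sum to at most `L(n-k)`. -/
noncomputable def IsLightlyLMDS {F : Type*} [Field F] [DecidableEq F]
    {ι : Type*} [Fintype ι] (k L : ℕ) (C : Submodule F (ι → F)) : Prop :=
  ¬∃ e : Fin (L + 1) → (ι → F),
      (∀ m, e m ≠ 0) ∧
      (∀ m, hammingNorm (e m) ≤ minHammingDist C - 1) ∧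
      (∀ m m', e m - e m' ∈ C) ∧
      (Pairwise fun m m' =>
        Disjoint (Function.support (e m)) (Function.support (e m'))) ∧
      (∑ m, hammingNorm (e m)) ≤ L * (Fintype.card ι - k)

/-- The block matrix `M_{J_0, J_1, …, J_L}(H)`: its rows are partitioned into
`L` blocks of `r` rows (indexed by `Fin L × Fin r`), its columns are indexed
by the disjoint union of `J_0, J_1, …, J_L`, the `m`-th block row being
`(-H_{J_0} | 0 | ⋯ | 0 | H_{J_m} | 0 | ⋯ | 0)`. -/
def blockMat {F : Type*} [Field F] {n r L : ℕ}
    (H : Matrix (Fin r) (Fin n) F) (J : Fin (L + 1) → Finset (Fin n)) :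
    Matrix (Fin L × Fin r) ((m : Fin (L + 1)) × {x : Fin n // x ∈ J m}) F :=
  fun li c =>
    if (c.1 : ℕ) = 0 then -H li.2 c.2.val
    else if (c.1 : ℕ) = (li.1 : ℕ) + 1 then H li.2 c.2.val
    else 0

noncomputable def eOf {F : Type*} [Field F] {n L : ℕ}
    (J : Fin (L + 1) → Finset (Fin n))
    (v : ((m : Fin (L + 1)) × {x : Fin n // x ∈ J m}) → F)
    (m : Fin (L + 1)) : Fin n → F :=
  fun x => if h : x ∈ J m then v ⟨m, ⟨x, h⟩⟩ else 0

lemma eOf_mulVec {F : Type*} [Field F] {n r L : ℕ}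
    (H : Matrix (Fin r) (Fin n) F) (J : Fin (L + 1) → Finset (Fin n))
    (v : ((m : Fin (L + 1)) × {x : Fin n // x ∈ J m}) → F)
    (m : Fin (L + 1)) (i : Fin r) :
    H.mulVec (eOf J v m) i = ∑ x : {x : Fin n // x ∈ J m}, H i x.val * v ⟨m, x⟩ := by
  rw [Matrix.mulVec, dotProduct]
  have h0 : ∀ x ∈ Finset.univ, x ∉ J m → H i x * eOf J v m x = 0 := by
    intro x _ hx; simp [eOf, hx]
  rw [← Finset.sum_subset (Finset.subset_univ (J m)) h0, ← Finset.sum_attach (J m)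
    (fun x => H i x * eOf J v m x)]
  rw [show (Finset.univ : Finset {x : Fin n // x ∈ J m}) = (J m).attach from rfl]
  refine Finset.sum_congr rfl fun x _ => ?_
  simp [eOf, x.2]

lemma key_sum {F : Type*} [Field F] {n r L : ℕ}
    (H : Matrix (Fin r) (Fin n) F) (J : Fin (L + 1) → Finset (Fin n))
    (v : ((m : Fin (L + 1)) × {x : Fin n // x ∈ J m}) → F)
    (li : Fin L × Fin r) :
    ∑ c, blockMat H J li c * v c
      = -(H.mulVec (eOf J v 0) li.2) + H.mulVec (eOf J v li.1.succ) li.2 := by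
  rw [← Finset.univ_sigma_univ, Finset.sum_sigma]
  have hsucc0 : li.1.succ ≠ (0 : Fin (L+1)) := Fin.succ_ne_zero _
  have hg : ∀ m ∈ Finset.univ,
      (∑ x : {x : Fin n // x ∈ J m}, blockMat H J li ⟨m, x⟩ * v ⟨m, x⟩)
      = (if m = (0 : Fin (L+1)) then -(H.mulVec (eOf J v m) li.2) else 0)
        + (if m = li.1.succ then H.mulVec (eOf J v m) li.2 else 0) := by
    intro m _
    rcases eq_or_ne m 0 with rfl | hm0
    · simp only [if_pos rfl, if_neg (Ne.symm hsucc0), add_zero, eOf_mulVec,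
        ← Finset.sum_neg_distrib]
      exact Finset.sum_congr rfl fun x _ => by simp [blockMat, neg_mul]
    · have hv0 : (m : ℕ) ≠ 0 := fun h => hm0 (Fin.ext h)
      rcases eq_or_ne m li.1.succ with rfl | hm1
      · simp only [if_neg hm0, if_pos rfl, zero_add, eOf_mulVec]
        refine Finset.sum_congr rfl fun x _ => ?_
        simp [blockMat, hv0, Fin.val_succ]
      · have hv1 : (m : ℕ) ≠ (li.1 : ℕ) + 1 := fun h =>
          hm1 (Fin.ext (by simp [Fin.val_succ, h]))
        simp only [if_neg hm0, if_neg hm1, add_zero]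
        refine Finset.sum_eq_zero fun x _ => ?_
        simp [blockMat, hv0, hv1]
  rw [Finset.sum_congr rfl hg, Finset.sum_add_distrib,
    Finset.sum_ite_eq' Finset.univ (0 : Fin (L+1)),
    Finset.sum_ite_eq' Finset.univ li.1.succ]
  simp


/-- Lemma `lightly`: let `C` be a linear `[n,k]` MDS code
with `k/n ≥ 1 - 1/L`, and let `H` be an `(n-k) × n` parity-check matrix of
`C`.  Then `C` is lightly `L`-MDS if and only if for all pairwise disjoint
subsets `J_0, …, J_L` of the coordinates with `|J_m| ≤ n-k` for all `m` and
`∑_m |J_m| = L(n-k)`, the square matrix `M_{J_0,…,J_L}(H)` has nonzero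
determinant. -/
theorem stmt15 {F : Type*} [Field F] [Fintype F] [DecidableEq F]
    {n k L : ℕ} (hL : 1 ≤ L)
    (C : Submodule F (Fin n → F))
    (hk : Module.finrank F C = k)
    (hMDS : IsMDSCode k C)
    (hrate : 1 - 1 / (L : ℚ) ≤ (k : ℚ) / (n : ℚ))
    (H : Matrix (Fin (n - k)) (Fin n) F)
    (hHrank : H.rank = n - k)
    (hHC : ∀ c : Fin n → F, c ∈ C ↔ H.mulVec c = 0) :
    IsLightlyLMDS k L C ↔
      ∀ J : Fin (L + 1) → Finset (Fin n),
        (Pairwise fun m m' => Disjoint (J m) (J m')) →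
        (∀ m, (J m).card ≤ n - k) →
        (∑ m, (J m).card) = L * (n - k) →
        ∀ e : (Fin L × Fin (n - k)) ≃ ((m : Fin (L + 1)) × {x : Fin n // x ∈ J m}),
          ((blockMat H J).submatrix id e).det ≠ 0 := by
  -- basic numerology
  have hMDS' : minHammingDist C = n - k + 1 := by
    simpa [IsMDSCode, Fintype.card_fin] using hMDS
  have hmin : ∀ c ∈ C, c ≠ 0 → n - k + 1 ≤ hammingNorm c := by
    intro c hc h0
    have : hammingNorm c ∈ {w : ℕ | ∃ c ∈ C, c ≠ 0 ∧ hammingNorm c = w} :=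
      ⟨c, hc, h0, rfl⟩
    have := Nat.sInf_le this
    rw [show sInf {w : ℕ | ∃ c ∈ C, c ≠ 0 ∧ hammingNorm c = w} = minHammingDist C from rfl,
      hMDS'] at this
    exact this
  have hkn : k ≤ n := by
    have h1 := Submodule.finrank_le C
    rw [hk, Module.finrank_pi] at h1
    simpa using h1
  have hLn : L * (n - k) ≤ n := by
    rcases Nat.eq_zero_or_pos n with rfl | hn
    · simp
    have hL' : (0 : ℚ) < L := by exact_mod_cast hL
    have hn' : (0 : ℚ) < n := by exact_mod_cast hn
    have h1 : (1 - 1 / (L : ℚ)) * n ≤ k := by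
      have := mul_le_mul_of_nonneg_right hrate (le_of_lt hn')
      rwa [div_mul_cancel₀ _ (ne_of_gt hn')] at this
    have h2 : (L : ℚ) * n - n ≤ L * k := by
      have := mul_le_mul_of_nonneg_left h1 (le_of_lt hL')
      calc (L : ℚ) * n - n = L * ((1 - 1 / L) * n) := by
            field_simp
        _ ≤ L * k := this
    have h3 : (L : ℚ) * n ≤ n + L * k := by linarith
    have h4 : L * n ≤ n + L * k := by exact_mod_cast h3
    have h5 : L * (n - k) + L * k = L * n := by
      rw [← Nat.mul_add, Nat.sub_add_cancel hkn]
    omega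
  constructor
  · -- lightly → det ≠ 0
    intro hlight J hJd hJc hJs e'
    intro hdet
    rw [← Matrix.exists_mulVec_eq_zero_iff] at hdet
    obtain ⟨w, hw0, hw⟩ := hdet
    set v : ((m : Fin (L + 1)) × {x : Fin n // x ∈ J m}) → F := w ∘ e'.symm with hv
    set e : Fin (L + 1) → Fin n → F := eOf J v with he
    have hrow : ∀ li : Fin L × Fin (n - k),
        -(H.mulVec (e 0) li.2) + H.mulVec (e li.1.succ) li.2 = 0 := by
      intro li
      have h1 := congrFun hw li
      rw [Matrix.mulVec, dotProduct] at h1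
      have h2 : ∑ p, ((blockMat H J).submatrix id e') li p * w p
          = ∑ c, blockMat H J li c * v c := by
        rw [← Equiv.sum_comp e' (fun c => blockMat H J li c * v c)]
        refine Finset.sum_congr rfl fun p _ => ?_
        simp [hv, Matrix.submatrix_apply]
      rw [show (0 : Fin L × Fin (n-k) → F) li = 0 from rfl] at h1
      rw [h2, key_sum] at h1
      exact h1
    have heq : ∀ m, H.mulVec (e m) = H.mulVec (e 0) := by
      intro m
      rcases Fin.eq_zero_or_eq_succ m with rfl | ⟨j, rfl⟩
      · rfl
      · funext i
        have h1 := hrow (j, i)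
        simp only at h1
        linear_combination h1
    have hwt : ∀ m, hammingNorm (e m) ≤ (J m).card := by
      intro m
      have hsub : (Finset.univ.filter fun x => e m x ≠ 0) ⊆ J m := by
        intro x hx
        rw [Finset.mem_filter] at hx
        by_contra h
        exact hx.2 (by simp [he, eOf, h])
      simpa [hammingNorm] using Finset.card_le_card hsub
    have hv0 : v ≠ 0 := by
      intro h
      apply hw0
      funext p
      have := congrFun h (e' p)
      simpa [hv] using this
    have hne : ∀ m, e m ≠ 0 := by
      by_contra h
      push_neg at h
      obtain ⟨m, hm⟩ := h
      have h0 : H.mulVec (e 0) = 0 := by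
        rw [← heq m, hm, Matrix.mulVec_zero]
      have hall : ∀ m', e m' = 0 := by
        intro m'
        by_contra hne'
        have hmem : e m' ∈ C := (hHC _).2 <| by rw [heq m', h0]
        have := hmin _ hmem hne'
        have hw' := (hwt m').trans (hJc m')
        omega
      apply hv0
      funext c
      obtain ⟨m', x⟩ := c
      have : e m' x.val = 0 := congrFun (hall m') x.val
      simpa [he, eOf, x.2] using this
    exact hlight ⟨e, hne, fun m => by rw [hMDS']; simpa using (hwt m).trans (hJc m),
      fun m m' => (hHC _).2 (by rw [Matrix.mulVec_sub, heq m, heq m', sub_self]),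
      fun m m' hmm' => by
        refine Set.disjoint_left.2 fun x hxm hxm' => ?_
        have h1 : x ∈ J m := by
          by_contra h; exact hxm (by simp [he, eOf, h])
        have h2 : x ∈ J m' := by
          by_contra h; exact hxm' (by simp [he, eOf, h])
        exact (Finset.disjoint_left.1 (hJd hmm')) h1 h2,
      by
        rw [Fintype.card_fin, ← hJs]
        exact Finset.sum_le_sum fun m _ => hwt m⟩
  · -- det ≠ 0 → lightly
    intro hdet
    rintro ⟨e, hne, hwt, hC, hdisj, hsum⟩
    set S : Fin (L + 1) → Finset (Fin n) :=
      fun m => Finset.univ.filter fun x => e m x ≠ 0 with hS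
    have hScard : ∀ m, (S m).card = hammingNorm (e m) := by
      intro m; simp [hS, hammingNorm]
    have hSle : ∀ m, (S m).card ≤ n - k := by
      intro m
      have h1 := hwt m
      rw [hMDS'] at h1
      rw [hScard m]
      omega
    have hSdisj : Pairwise fun m m' => Disjoint (S m) (S m') := by
      intro m m' hmm'
      refine Finset.disjoint_left.2 fun x hxm hxm' => ?_
      rw [hS, Finset.mem_filter] at hxm hxm'
      exact Set.disjoint_left.1 (hdisj hmm') hxm.2 hxm'.2
    have hsum' : (∑ m, (S m).card) ≤ L * (n - k) := by
      rw [Finset.sum_congr rfl fun m _ => hScard m]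
      simpa [Fintype.card_fin] using hsum
    obtain ⟨J, hSJ, hJd, hJc, hJsum⟩ := pad_aux (n - k) (L * (n - k) - ∑ m, (S m).card) S
      hSdisj hSle
      (by
        rw [Fintype.card_fin]
        have : (L + 1) * (n - k) = L * (n - k) + (n - k) := by ring
        omega)
      (by rw [Fintype.card_fin]; omega)
    have hJs : (∑ m, (J m).card) = L * (n - k) := by omega
    -- build the equivalence
    have hcardeq : Fintype.card (Fin L × Fin (n - k))
        = Fintype.card ((m : Fin (L + 1)) × {x : Fin n // x ∈ J m}) := by
      simp only [Fintype.card_prod, Fintype.card_fin, Fintype.card_sigma,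
        Fintype.card_coe]
      exact hJs.symm
    let e' := Fintype.equivOfCardEq hcardeq
    refine hdet J hJd hJc hJs e' ?_
    rw [← Matrix.exists_mulVec_eq_zero_iff]
    set v : ((m : Fin (L + 1)) × {x : Fin n // x ∈ J m}) → F :=
      fun c => e c.1 c.2.val with hv
    have heOf : ∀ m, eOf J v m = e m := by
      intro m
      funext x
      by_cases h : x ∈ J m
      · simp [eOf, h, hv]
      · have hxs : x ∉ S m := fun hx => h (hSJ m hx)
        rw [hS, Finset.mem_filter] at hxs
        push_neg at hxs
        simp [eOf, h, hxs (Finset.mem_univ x)]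
    refine ⟨v ∘ e', ?_, ?_⟩
    · intro h
      obtain ⟨x, hx⟩ := Function.ne_iff.1 (hne 0)
      have hxS : x ∈ S 0 := by rw [hS, Finset.mem_filter]; exact ⟨Finset.mem_univ x, hx⟩
      have hxJ : x ∈ J 0 := hSJ 0 hxS
      have h2 := congrFun h (e'.symm ⟨0, ⟨x, hxJ⟩⟩)
      rw [Function.comp_apply, Equiv.apply_symm_apply] at h2
      exact hx (by simpa [hv] using h2)
    · funext li
      rw [Matrix.mulVec, dotProduct]
      have h2 : ∑ p, ((blockMat H J).submatrix id e') li p * (v ∘ e') p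
          = ∑ c, blockMat H J li c * v c := by
        rw [← Equiv.sum_comp e' (fun c => blockMat H J li c * v c)]
        exact Finset.sum_congr rfl fun p _ => by simp [Matrix.submatrix_apply]
      rw [h2, key_sum, heOf, heOf]
      have hmem : e 0 - e li.1.succ ∈ C := hC 0 li.1.succ
      have := (hHC _).1 hmem
      rw [Matrix.mulVec_sub, sub_eq_zero] at this
      rw [show (0 : Fin L × Fin (n - k) → F) li = 0 from rfl, ← this]
      ring
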